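/- Let 0 < α < 2, let a < b be real numbers, let x ∈ (a, (a+b)/2), and set δ = x − a = min{x−a, b−x}. Let p : ℝ → ℝ be bounded and Borel measurable with p(z) = 1 for z ≤ a, p(z) = 0 for z ≥ b, and suppose p is twice continuously differentiable in a neighborhood of x. Then the function y ↦ [p(x+y) − p(x) − 1_{{|y|<δ}}·y·p′(x)]/|y|^{1+α} is Lebesgue integrable on ℝ\{0}, and ∫_{ℝ\{0}} [p(x+y) − p(x) − 1_{{|y|<δ}} y p′(x)]/|y|^{1+α} dy = −(1/α)[(x−a)^{−α} + (b−x)^{−α}]·p(x) + ∫_{x−a}^{b−x} (p(x+y) − p(x))/|y|^{1+α} dy + ∫_{a−x}^{x−a} (p(x+y) − p(x) − y p′(x))/|y|^{1+α} dy + 1/(α(x−a)^α). -/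

import Mathlib

open MeasureTheory Set intervalIntegral

/-- Rewriting the symmetric part of the nonlocal generator for the escape
probability on `D = (a,b)`, in the case `a < x < (a+b)/2` (so the truncation
radius is `δ = x - a`): with exterior values `p = 1` on `(-∞,a]` and `p = 0`
on `[b,∞)`, the integrand `[p(x+y) - p(x) - 1_{|y|<δ} y p'(x)]/|y|^{1+α}` is
integrable on `ℝ \ {0}` and its integral equals
`-(1/α)[(x-a)^{-α} + (b-x)^{-α}] p(x) + ∫_{x-a}^{b-x} (p(x+y)-p(x))/|y|^{1+α} dy
 + ∫_{a-x}^{x-a} (p(x+y)-p(x)-y p'(x))/|y|^{1+α} dy + 1/(α(x-a)^α)`. -/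
theorem escape_probability_symmetric_part_left (α a b x : ℝ)
    (hα0 : 0 < α) (hα2 : α < 2) (hab : a < b)
    (hx : x ∈ Ioo a ((a + b) / 2)) (p : ℝ → ℝ) (hmeas : Measurable p)
    (hbdd : ∃ M : ℝ, ∀ z : ℝ, |p z| ≤ M)
    (hpa : ∀ z : ℝ, z ≤ a → p z = 1) (hpb : ∀ z : ℝ, b ≤ z → p z = 0)
    (hsmooth : ContDiffAt ℝ 2 p x) :
    IntegrableOn (fun y : ℝ =>
        (p (x + y) - p x - (if |y| < x - a then y * deriv p x else 0)) / |y| ^ (1 + α))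
      {(0 : ℝ)}ᶜ ∧
    (∫ y in {(0 : ℝ)}ᶜ,
        (p (x + y) - p x - (if |y| < x - a then y * deriv p x else 0)) / |y| ^ (1 + α)) =
      -(1 / α) * ((x - a) ^ (-α) + (b - x) ^ (-α)) * p x +
        (∫ y in (x - a)..(b - x), (p (x + y) - p x) / |y| ^ (1 + α)) +
        (∫ y in (a - x)..(x - a), (p (x + y) - p x - y * deriv p x) / |y| ^ (1 + α)) +
        1 / (α * (x - a) ^ α) := by
  obtain ⟨ha, hxm⟩ := hx
  obtain ⟨M, hM⟩ := hbdd
  have hM0 : 0 ≤ M := le_trans (abs_nonneg _) (hM 0)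
  set c := deriv p x with hc
  set δ := x - a with hδdef
  have hδ : 0 < δ := by simp only [hδdef]; linarith
  have hδb : δ < b - x := by simp only [hδdef]; linarith
  have hbx : 0 < b - x := hδ.trans hδb
  set f : ℝ → ℝ := fun y => (p (x + y) - p x - (if |y| < δ then y * c else 0)) / |y| ^ (1 + α)
    with hf
  have hmf : Measurable f := by
    apply Measurable.div
    · exact ((hmeas.comp (measurable_const.add measurable_id)).sub measurable_const).sub
        (Measurable.ite (measurableSet_lt measurable_abs measurable_const)
          (measurable_id.mul_const c) measurable_const)
    · fun_prop
  have hexp : -(1 + α) < -1 := by linarith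
  have hexp1 : -(1 + α) + 1 = -α := by ring
  -- Taylor bound
  have taylor : ∃ ε C', 0 < ε ∧ ε < δ ∧ 0 ≤ C' ∧
      ∀ y : ℝ, |y| ≤ ε → |p (x + y) - p x - y * c| ≤ C' * y ^ 2 := by
    obtain ⟨u, hu_nhds, hpu⟩ := hsmooth.contDiffOn le_rfl (by simp)
    obtain ⟨ε₀, hε₀, hball⟩ := Metric.mem_nhds_iff.1 hu_nhds
    have hp2 : ContDiffOn ℝ 2 p (Metric.ball x ε₀) := hpu.mono hball
    have hdp : ContDiffOn ℝ 1 (deriv p) (Metric.ball x ε₀) :=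
      hp2.deriv_of_isOpen Metric.isOpen_ball (by norm_num)
    have hpdiff : ∀ t ∈ Metric.ball x ε₀, DifferentiableAt ℝ p t := fun t ht =>
      (hp2.differentiableOn (by norm_num)).differentiableAt (Metric.isOpen_ball.mem_nhds ht)
    have hd2 : DifferentiableAt ℝ (deriv p) x :=
      (hdp.differentiableOn (by norm_num)).differentiableAt
        (Metric.isOpen_ball.mem_nhds (Metric.mem_ball_self hε₀))
    obtain ⟨C, hC⟩ := hd2.isBigO_sub.isBigOWith
    obtain ⟨r, hr, hCr⟩ := Metric.eventually_nhds_iff.1 hC.bound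
    refine ⟨min (min (ε₀ / 2) (r / 2)) (δ / 2), max C 0, by positivity, ?_, le_max_right _ _, ?_⟩
    · calc min (min (ε₀ / 2) (r / 2)) (δ / 2) ≤ δ / 2 := min_le_right _ _
        _ < δ := by linarith
    · intro y hy
      have hyε₀ : |y| < ε₀ := lt_of_le_of_lt hy
        (lt_of_le_of_lt (le_trans (min_le_left _ _) (min_le_left _ _)) (by linarith))
      have hyr : |y| < r := lt_of_le_of_lt hy
        (lt_of_le_of_lt (le_trans (min_le_left _ _) (min_le_right _ _)) (by linarith))
      set s := Metric.closedBall x |y| with hs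
      have hs_sub : s ⊆ Metric.ball x ε₀ := fun t ht => by
        simp only [Metric.mem_closedBall, hs] at ht
        exact Metric.mem_ball.2 (lt_of_le_of_lt ht hyε₀)
      have hderivg : ∀ t ∈ s, HasDerivWithinAt (fun t => p t - t * c) (deriv p t - c) s t := by
        intro t ht
        have h1 : HasDerivAt (fun t => p t - t * c) (deriv p t - 1 * c) t :=
          ((hpdiff t (hs_sub ht)).hasDerivAt).sub ((hasDerivAt_id t).mul_const c)
        simpa using h1.hasDerivWithinAt
      have hbound : ∀ t ∈ s, ‖deriv p t - c‖ ≤ max C 0 * |y| := by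
        intro t ht
        have htx : dist t x ≤ |y| := Metric.mem_closedBall.1 ht
        have h1 : ‖deriv p t - deriv p x‖ ≤ C * ‖t - x‖ := hCr (lt_of_le_of_lt htx hyr)
        calc ‖deriv p t - c‖ ≤ C * ‖t - x‖ := h1
          _ ≤ max C 0 * |y| := by
              rcases le_or_gt C 0 with h | h
              · have h0 : C * ‖t - x‖ ≤ 0 := mul_nonpos_of_nonpos_of_nonneg h (norm_nonneg _)
                exact le_trans h0 (mul_nonneg (le_max_right _ _) (abs_nonneg _))
              · exact mul_le_mul (le_max_left _ _) (by simpa [dist_eq_norm] using htx)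
                  (norm_nonneg _) (le_of_lt (lt_max_of_lt_left h))
      have hmem : x + y ∈ s := by
        simp only [hs, Metric.mem_closedBall, dist_eq_norm, add_sub_cancel_left,
          Real.norm_eq_abs, le_refl]
      have hkey := (convex_closedBall x |y|).norm_image_sub_le_of_norm_hasDerivWithin_le hderivg
        hbound (Metric.mem_closedBall_self (abs_nonneg y)) hmem
      have h2 : p (x + y) - (x + y) * c - (p x - x * c) = p (x + y) - p x - y * c := by ring
      rw [Real.norm_eq_abs, h2, Real.norm_eq_abs, add_sub_cancel_left] at hkey
      calc |p (x + y) - p x - y * c| ≤ max C 0 * |y| * |y| := hkey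
        _ = max C 0 * y ^ 2 := by rw [mul_assoc, abs_mul_abs_self, sq]
  obtain ⟨ε, C', hεpos, hεδ, hC'0, hkey⟩ := taylor
  -- Region E4 = Ici (b - x)
  have hfE4 : ∀ y ∈ Ioi (b - x), f y = -p x * y ^ (-(1 + α)) := by
    intro y hy
    have hy' : b - x < y := hy
    have hy0 : 0 < y := hbx.trans hy'
    have hp0 : p (x + y) = 0 := hpb _ (by linarith)
    have habs : |y| = y := abs_of_pos hy0
    have hnot : ¬ |y| < δ := by rw [habs]; push_neg; linarith
    simp only [hf]
    rw [if_neg hnot, hp0, habs, Real.rpow_neg hy0.le]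
    ring
  have hIntE4 : IntegrableOn f (Ici (b - x)) := by
    rw [integrableOn_Ici_iff_integrableOn_Ioi]
    exact IntegrableOn.congr_fun ((integrableOn_Ioi_rpow_of_lt hexp hbx).const_mul (-p x))
      (fun y hy => (hfE4 y hy).symm) measurableSet_Ioi
  have hIE4 : ∫ y in Ici (b - x), f y = -p x * ((b - x) ^ (-α) / α) := by
    rw [integral_Ici_eq_integral_Ioi, setIntegral_congr_fun measurableSet_Ioi hfE4,
      MeasureTheory.integral_const_mul, integral_Ioi_rpow_of_lt hexp hbx, hexp1]
    ring
  -- Region E1 = Iic (-δ)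
  have hfE1 : ∀ y ∈ Iic (-δ), f y = (1 - p x) * (-y) ^ (-(1 + α)) := by
    intro y hy
    have hy' : y ≤ -δ := hy
    have hy0 : y < 0 := by linarith
    have hp1 : p (x + y) = 1 := hpa _ (by simp only [hδdef] at hy' ⊢; linarith)
    have habs : |y| = -y := abs_of_neg hy0
    have hnot : ¬ |y| < δ := by rw [habs]; push_neg; linarith
    simp only [hf]
    rw [if_neg hnot, hp1, habs, Real.rpow_neg (by linarith : (0:ℝ) ≤ -y)]
    ring
  have hIntE1 : IntegrableOn f (Iic (-δ)) := by
    have h0 : IntegrableOn (fun t : ℝ => (1 - p x) * t ^ (-(1 + α))) (Ici δ) :=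
      (integrableOn_Ici_iff_integrableOn_Ioi (by exact enorm_ne_top)).2
        ((integrableOn_Ioi_rpow_of_lt hexp hδ).const_mul (1 - p x))
    have h1 := ((Measure.measurePreserving_neg (volume : Measure ℝ)).integrableOn_comp_preimage
      (Homeomorph.neg ℝ).measurableEmbedding).2 h0
    have hset : (Neg.neg ⁻¹' (Ici δ) : Set ℝ) = Iic (-δ) := by
      ext t; simp [le_neg]
    rw [hset] at h1
    exact IntegrableOn.congr_fun h1 (fun y hy => (hfE1 y hy).symm) measurableSet_Iic
  have hIE1 : ∫ y in Iic (-δ), f y = (1 - p x) * (δ ^ (-α) / α) := by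
    rw [setIntegral_congr_fun measurableSet_Iic hfE1]
    have := integral_comp_neg_Iic (-δ) (fun t : ℝ => (1 - p x) * t ^ (-(1 + α)))
    rw [neg_neg] at this
    rw [this, MeasureTheory.integral_const_mul, integral_Ioi_rpow_of_lt hexp hδ, hexp1]
    ring
  -- Region E3 = Ico δ (b - x)
  have hfE3 : ∀ y ∈ Ioo δ (b - x), f y = (p (x + y) - p x) / |y| ^ (1 + α) := by
    intro y hy
    have hy0 : 0 < y := hδ.trans hy.1
    have hnot : ¬ |y| < δ := by rw [abs_of_pos hy0]; push_neg; exact hy.1.le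
    simp only [hf, if_neg hnot, sub_zero]
  have hIntE3 : IntegrableOn f (Ico δ (b - x)) := by
    have hbd : ∀ y ∈ Ico δ (b - x), ‖f y‖ ≤ 2 * M / δ ^ (1 + α) := by
      intro y hy
      have hy0 : 0 < y := lt_of_lt_of_le hδ hy.1
      have habs : |y| = y := abs_of_pos hy0
      have hnot : ¬ |y| < δ := by rw [habs]; push_neg; exact hy.1
      have hden : δ ^ (1 + α) ≤ |y| ^ (1 + α) :=
        Real.rpow_le_rpow hδ.le (by rw [habs]; exact hy.1) (by linarith)
      have hdenpos : (0:ℝ) < δ ^ (1 + α) := Real.rpow_pos_of_pos hδ _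
      have hnum : |p (x + y) - p x - (if |y| < δ then y * c else 0)| ≤ 2 * M := by
        rw [if_neg hnot, sub_zero]
        calc |p (x + y) - p x| ≤ |p (x + y)| + |p x| := abs_sub _ _
          _ ≤ 2 * M := by linarith [hM (x + y), hM x]
      rw [hf]
      simp only [Real.norm_eq_abs, abs_div, abs_of_nonneg (Real.rpow_nonneg (abs_nonneg y) _)]
      exact div_le_div₀ (by linarith) hnum hdenpos hden
    exact Measure.integrableOn_of_bounded measure_Ico_lt_top.ne hmf.aestronglyMeasurable
      ((ae_restrict_iff' measurableSet_Ico).2 (ae_of_all _ hbd))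
  have hIE3 : ∫ y in Ico δ (b - x), f y
      = ∫ y in δ..(b - x), (p (x + y) - p x) / |y| ^ (1 + α) := by
    rw [intervalIntegral.integral_of_le hδb.le, integral_Ioc_eq_integral_Ioo,
      integral_Ico_eq_integral_Ioo]
    exact setIntegral_congr_fun measurableSet_Ioo hfE3
  -- Region E2 = Ioo (-δ) δ
  have hfE2 : ∀ y ∈ Ioo (-δ) δ, f y = (p (x + y) - p x - y * c) / |y| ^ (1 + α) := by
    intro y hy
    simp only [hf, if_pos (abs_lt.2 ⟨hy.1, hy.2⟩)]
  have habsrpow : IntegrableOn (fun t : ℝ => |t| ^ (1 - α)) (Ioo (-δ) δ) := by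
    have h0 : IntegrableOn (fun t : ℝ => t ^ (1 - α)) (Ioo 0 δ) :=
      (integrableOn_Ioo_rpow_iff hδ).2 (by linarith)
    have h0' : IntegrableOn (fun t : ℝ => |t| ^ (1 - α)) (Ioo 0 δ) :=
      IntegrableOn.congr_fun h0 (fun t ht => by rw [abs_of_pos ht.1]) measurableSet_Ioo
    have hneg : IntegrableOn (fun t : ℝ => |t| ^ (1 - α)) (Ioo (-δ) 0) := by
      have h1 := ((Measure.measurePreserving_neg (volume : Measure ℝ)).integrableOn_comp_preimage
        (Homeomorph.neg ℝ).measurableEmbedding).2 h0'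
      simpa [Function.comp_def, abs_neg, neg_preimage, neg_Ioo, neg_zero] using h1
    have hico : IntegrableOn (fun t : ℝ => |t| ^ (1 - α)) (Ico 0 δ) :=
      (integrableOn_Ico_iff_integrableOn_Ioo (by simp)).2 h0'
    have hunion := integrableOn_union.2 ⟨hneg, hico⟩
    rwa [Ioo_union_Ico_eq_Ioo (by linarith) hδ.le] at hunion
  set K := (2 * M + δ * |c|) / ε ^ (1 + α) with hK
  have hK0 : 0 ≤ K := div_nonneg (by positivity) (Real.rpow_nonneg hεpos.le _)
  have hbd2 : ∀ y ∈ Ioo (-δ) δ, ‖f y‖ ≤ C' * |y| ^ (1 - α) + K := by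
    intro y hy
    have hyδ : |y| < δ := abs_lt.2 ⟨hy.1, hy.2⟩
    rw [hfE2 y hy]
    rcases eq_or_ne y 0 with rfl | hy0
    · simp only [add_zero, sub_self, zero_mul, sub_zero, zero_div, norm_zero]
      exact add_nonneg (mul_nonneg hC'0 (Real.rpow_nonneg (abs_nonneg _) _)) hK0
    · have habs : 0 < |y| := abs_pos.2 hy0
      have hd : 0 < |y| ^ (1 + α) := Real.rpow_pos_of_pos habs _
      rcases le_or_gt |y| ε with hle | hlt
      · have h1 : |p (x + y) - p x - y * c| ≤ C' * y ^ 2 := hkey y hle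
        have h2 : ‖(p (x + y) - p x - y * c) / |y| ^ (1 + α)‖ ≤ C' * y ^ 2 / |y| ^ (1 + α) := by
          rw [Real.norm_eq_abs, abs_div, abs_of_pos hd]
          gcongr
        have h3 : C' * y ^ 2 / |y| ^ (1 + α) = C' * |y| ^ (1 - α) := by
          rw [← sq_abs, ← Real.rpow_natCast |y| 2, mul_div_assoc, ← Real.rpow_sub habs,
            show ((2:ℕ):ℝ) - (1 + α) = 1 - α by push_cast; ring]
        calc ‖(p (x + y) - p x - y * c) / |y| ^ (1 + α)‖ ≤ C' * y ^ 2 / |y| ^ (1 + α) := h2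
          _ = C' * |y| ^ (1 - α) := h3
          _ ≤ C' * |y| ^ (1 - α) + K := le_add_of_nonneg_right hK0
      · have hnum : |p (x + y) - p x - y * c| ≤ 2 * M + δ * |c| := by
          calc |p (x + y) - p x - y * c| ≤ |p (x + y) - p x| + |y * c| := abs_sub _ _
            _ ≤ (|p (x + y)| + |p x|) + |y| * |c| := by
                rw [abs_mul]; exact add_le_add_left (abs_sub _ _) _
            _ ≤ 2 * M + δ * |c| := by
                have := hM (x + y); have := hM x
                have : |y| * |c| ≤ δ * |c| := mul_le_mul_of_nonneg_right hyδ.le (abs_nonneg c)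
                linarith [hM (x + y), hM x]
        have hden : ε ^ (1 + α) ≤ |y| ^ (1 + α) :=
          Real.rpow_le_rpow hεpos.le hlt.le (by linarith)
        have h2 : ‖(p (x + y) - p x - y * c) / |y| ^ (1 + α)‖ ≤ K := by
          rw [Real.norm_eq_abs, abs_div, abs_of_pos hd, hK]
          exact div_le_div₀ (by positivity) hnum (Real.rpow_pos_of_pos hεpos _) hden
        calc ‖(p (x + y) - p x - y * c) / |y| ^ (1 + α)‖ ≤ K := h2
          _ ≤ C' * |y| ^ (1 - α) + K :=
            le_add_of_nonneg_left (mul_nonneg hC'0 (Real.rpow_nonneg (abs_nonneg _) _))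
  have hIntE2 : IntegrableOn f (Ioo (-δ) δ) := by
    refine Integrable.mono' ((habsrpow.const_mul C').add
      (integrableOn_const (C := K) measure_Ioo_lt_top.ne)) hmf.aestronglyMeasurable ?_
    filter_upwards [ae_restrict_mem measurableSet_Ioo] with y hy using hbd2 y hy
  have hIE2 : ∫ y in Ioo (-δ) δ, f y
      = ∫ y in (a - x)..(x - a), (p (x + y) - p x - y * c) / |y| ^ (1 + α) := by
    have hax : a - x = -δ := by rw [hδdef]; ring
    rw [hax, ← hδdef, intervalIntegral.integral_of_le (by linarith : -δ ≤ δ),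
      integral_Ioc_eq_integral_Ioo]
    exact setIntegral_congr_fun measurableSet_Ioo hfE2
  -- assemble
  have hsplit : Iic (-δ) ∪ (Ioo (-δ) δ ∪ (Ico δ (b - x) ∪ Ici (b - x))) = univ := by
    ext y
    simp only [mem_union, mem_Iic, mem_Ioo, mem_Ico, mem_Ici, mem_univ, iff_true]
    rcases le_or_gt y (-δ) with h | h
    · exact Or.inl h
    rcases lt_or_ge y δ with h2 | h2
    · exact Or.inr (Or.inl ⟨h, h2⟩)
    rcases lt_or_ge y (b - x) with h3 | h3
    · exact Or.inr (Or.inr (Or.inl ⟨h2, h3⟩))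
    · exact Or.inr (Or.inr (Or.inr h3))
  have hIntTot : Integrable f := by
    rw [← integrableOn_univ, ← hsplit]
    exact integrableOn_union.2 ⟨hIntE1, integrableOn_union.2 ⟨hIntE2,
      integrableOn_union.2 ⟨hIntE3, hIntE4⟩⟩⟩
  refine ⟨hIntTot.integrableOn, ?_⟩
  have hres : (volume : Measure ℝ).restrict {(0:ℝ)}ᶜ = volume := by
    have h00 : ({(0:ℝ)}ᶜ : Set ℝ) =ᵐ[volume] (univ : Set ℝ) := by
      rw [ae_eq_univ]; simp
    rw [Measure.restrict_congr_set h00, Measure.restrict_univ]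
  have d1 : Disjoint (Iic (-δ)) (Ioo (-δ) δ ∪ (Ico δ (b - x) ∪ Ici (b - x))) := by
    refine Set.disjoint_left.mpr ?_
    rintro y (hy : y ≤ -δ) hy'
    simp only [mem_union, mem_Ioo, mem_Ico, mem_Ici] at hy'
    rcases hy' with ⟨h1, h2⟩ | ⟨h1, h2⟩ | h1 <;> linarith
  have d2 : Disjoint (Ioo (-δ) δ) (Ico δ (b - x) ∪ Ici (b - x)) := by
    refine Set.disjoint_left.mpr ?_
    rintro y ⟨hy1, hy2⟩ hy'
    simp only [mem_union, mem_Ico, mem_Ici] at hy'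
    rcases hy' with ⟨h1, h2⟩ | h1 <;> linarith
  have d3 : Disjoint (Ico δ (b - x)) (Ici (b - x)) := by
    refine Set.disjoint_left.mpr ?_
    rintro y ⟨hy1, hy2⟩ (hy' : b - x ≤ y)
    linarith
  have hcalc : (∫ y in {(0:ℝ)}ᶜ, f y) = (∫ y in Iic (-δ), f y) + ((∫ y in Ioo (-δ) δ, f y) +
      ((∫ y in Ico δ (b - x), f y) + ∫ y in Ici (b - x), f y)) := by
    rw [hres, ← setIntegral_univ (μ := volume) (f := f), ← hsplit]
    rw [setIntegral_union d1 (measurableSet_Ioo.union (measurableSet_Ico.union measurableSet_Ici))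
      hIntE1 (integrableOn_union.2 ⟨hIntE2, integrableOn_union.2 ⟨hIntE3, hIntE4⟩⟩)]
    rw [setIntegral_union d2 (measurableSet_Ico.union measurableSet_Ici) hIntE2
      (integrableOn_union.2 ⟨hIntE3, hIntE4⟩)]
    rw [setIntegral_union d3 measurableSet_Ici hIntE3 hIntE4]
  rw [hcalc, hIE1, hIE2, hIE3, hIE4]
  rw [Real.rpow_neg hδ.le α]
  ring
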